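/- Suppose t^n ≠ 1. Set V := (I - P·Y^{-1})^{-1} and W := (I - (I - P)·X^{-1})^{-1}, let K be the 2m×m complex matrix with upper m×m block (t^{-n}·(Σ_{i=0}^{m-1} X^i)·X)·(I - P) + W·P and lower m×m block (-t^{-n}·(Σ_{i=0}^{n-1} Y^i)·Y)·(I - P) - V·(I - X^{-1})·W·P, let J be the 2m×m matrix with upper block t^{-n}·(Σ_{i=0}^{m-1} X^i)·X and lower block -t^{-n}·(Σ_{i=0}^{n-1} Y^i)·Y, and set Θ := (I - P) + P·(t^{-n}·(Σ_{i=0}^{m-1} X^i)·X)·P. Then K·Θ = J. -/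

import Mathlib

open Matrix Finset

namespace Stmt14Aux

variable {m : ℕ}

/-- matrix of the function `f` (row `i` has a `1` in column `f i`). -/
def pm (m : ℕ) (f : Fin m → Fin m) : Matrix (Fin m) (Fin m) ℂ :=
  Matrix.of fun i j => if j = f i then 1 else 0

lemma pm_mul_pm (f g : Fin m → Fin m) : pm m f * pm m g = pm m (fun i => g (f i)) := by
  ext i j
  simp only [pm, Matrix.mul_apply, Matrix.of_apply, ite_mul, one_mul, zero_mul]
  rw [Finset.sum_ite_eq' univ (f i) (fun l => if j = g l then (1:ℂ) else 0)]
  simp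

lemma pm_mul_diag (f : Fin m → Fin m) (d : Fin m → ℂ) :
    pm m f * diagonal d = diagonal (fun i => d (f i)) * pm m f := by
  ext i j
  rw [Matrix.mul_diagonal, Matrix.diagonal_mul]
  simp only [pm, Matrix.of_apply]
  by_cases h : j = f i
  · subst h; simp
  · simp [h]

lemma pm_id : pm m id = 1 := by
  ext i j
  simp [pm, Matrix.one_apply, eq_comm]

lemma dp_pow (g : Fin m → ℂ) (f : Fin m → Fin m) (k : ℕ) :
    (diagonal g * pm m f) ^ k
      = diagonal (fun i => ∏ j ∈ range k, g (f^[j] i)) * pm m (f^[k]) := by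
  induction k with
  | zero => simp [pm_id]
  | succ k ih =>
    rw [pow_succ, ih, mul_assoc, ← mul_assoc (pm m (f^[k])), pm_mul_diag,
      mul_assoc, pm_mul_pm, ← mul_assoc, diagonal_mul_diagonal]
    have h1 : (fun i => f (f^[k] i)) = f^[k+1] := by
      funext i; exact (Function.iterate_succ_apply' f k i).symm
    have h2 : (fun i => (∏ j ∈ range k, g (f^[j] i)) * g (f^[k] i))
        = fun i => ∏ j ∈ range (k+1), g (f^[j] i) := by
      funext i; rw [Finset.prod_range_succ]
    rw [h1, h2]

variable [NeZero m]

def sh (m : ℕ) [NeZero m] : Fin m → Fin m := fun i => i + 1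

lemma sh_iterate (k : ℕ) (i : Fin m) : (((sh m)^[k]) i).val = (i.val + k) % m := by
  induction k with
  | zero => simp [Nat.mod_eq_of_lt i.isLt]
  | succ k ih =>
    rw [Function.iterate_succ_apply', sh, Fin.val_add, ih, Fin.val_one']
    rw [Nat.mod_add_mod, Nat.add_mod_mod, Nat.add_assoc]

lemma orbit_prod (c e : ℕ) (hc : Nat.gcd m c = 1) (d : Fin m → ℂ) (i : Fin m) :
    ∏ j ∈ range m, d ((sh m)^[j * c + e] i) = ∏ x, d x := by
  have hm0 : 0 < m := Nat.pos_of_ne_zero (NeZero.ne m)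
  set F : ℕ → Fin m := fun j => (sh m)^[j * c + e] i with hF
  have hFval : ∀ j, (F j).val = (i.val + (j * c + e)) % m := fun j => sh_iterate _ _
  have hinj : Set.InjOn F (range m : Finset ℕ) := by
    intro j₁ h₁ j₂ h₂ hEq
    simp only [Finset.coe_range, Set.mem_Iio] at h₁ h₂
    have hv : (i.val + (j₁ * c + e)) % m = (i.val + (j₂ * c + e)) % m := by
      rw [← hFval, ← hFval, hEq]
    have h3 : j₁ * c ≡ j₂ * c [MOD m] := by
      have : (i.val + e) + j₁ * c ≡ (i.val + e) + j₂ * c [MOD m] := by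
        unfold Nat.ModEq
        calc ((i.val + e) + j₁ * c) % m = (i.val + (j₁ * c + e)) % m := by ring_nf
          _ = (i.val + (j₂ * c + e)) % m := hv
          _ = ((i.val + e) + j₂ * c) % m := by ring_nf
      exact Nat.ModEq.add_left_cancel' _ this
    have h4 : j₁ ≡ j₂ [MOD m] := Nat.ModEq.cancel_right_of_coprime hc h3
    exact h4.eq_of_lt_of_lt h₁ h₂
  have himg : (range m).image F = univ := by
    apply Finset.eq_univ_of_card
    rw [Finset.card_image_of_injOn hinj, Finset.card_range, Fintype.card_fin]
  rw [show (univ : Finset (Fin m)) = (range m).image F from himg.symm] at *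
  rw [Finset.prod_image (fun a ha b hb h => hinj ha hb h)]

lemma sh_iterate_m : (sh m)^[m] = fun i => i := by
  funext i
  apply Fin.ext
  rw [sh_iterate]
  simp [Nat.mod_eq_of_lt i.isLt]

end Stmt14Aux

open Stmt14Aux

/-- `K · Θ = J`: right multiplication of the kernel basis `K` of `∂₁` by `Θ`
yields the image basis `J` of `∂₂`. -/
theorem stmt_14 (m n : ℕ) (hm : 1 < m) (hn : 1 < n) (hmn : Nat.Coprime m n)
    (r s : ℤ) (hbezout : (m : ℤ) * r + (n : ℤ) * s = 1)
    (hr₁ : -(n : ℤ) < r) (hr₂ : r < 0) (hs₁ : 0 < s) (hs₂ : s < (m : ℤ))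
    (t : ℂ) (ht0 : t ≠ 0) (htn : t ^ n ≠ 1)
    (b : Fin m → ℤ) (hb : (n : ℤ) ∣ ∑ i, b i)
    (a : ℤ) (ha : ¬ (n : ℤ) ∣ a)
    (C X Y P V W Θ : Matrix (Fin m) (Fin m) ℂ)
    (hC : ∀ i j : Fin m, C i j =
      if (i : ℕ) + 1 = (j : ℕ) then 1
      else if (i : ℕ) = m - 1 ∧ (j : ℕ) = 0 then t else 0)
    (hX : X = C ^ n)
    (hY : Y = t • Matrix.diagonal
      (fun i => Complex.exp (2 * (Real.pi : ℂ) * Complex.I * (b i : ℂ) / (n : ℂ))))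
    (hP : P = Matrix.diagonal (fun i => if (n : ℤ) ∣ (b i + a) then 0 else 1))
    (hV : V = (1 - P * Y⁻¹)⁻¹)
    (hW : W = (1 - (1 - P) * X⁻¹)⁻¹)
    (hΘ : Θ = (1 - P) + P * (t ^ (-(n : ℤ)) • ((∑ i ∈ Finset.range m, X ^ i) * X)) * P)
    (K J : Matrix (Fin m ⊕ Fin m) (Fin m) ℂ)
    (hK : K = Matrix.fromRows
      ((t ^ (-(n : ℤ)) • ((∑ i ∈ Finset.range m, X ^ i) * X)) * (1 - P) + W * P)
      ((-(t ^ (-(n : ℤ))) • ((∑ i ∈ Finset.range n, Y ^ i) * Y)) * (1 - P) -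
        V * (1 - X⁻¹) * W * P))
    (hJ : J = Matrix.fromRows
      (t ^ (-(n : ℤ)) • ((∑ i ∈ Finset.range m, X ^ i) * X))
      (-(t ^ (-(n : ℤ))) • ((∑ i ∈ Finset.range n, Y ^ i) * Y))) :
    K * Θ = J := by

  haveI : NeZero m := ⟨by omega⟩
  have hm0 : 0 < m := by omega
  have htn0 : (t : ℂ) ^ n ≠ 0 := pow_ne_zero _ ht0
  have hz : t ^ (-(n : ℤ)) = (t ^ n)⁻¹ := by
    rw [_root_.zpow_neg, zpow_natCast]
  set A := t ^ (-(n : ℤ)) • ((∑ i ∈ Finset.range m, X ^ i) * X) with hAdef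
  set B := (-(t ^ (-(n : ℤ)))) • ((∑ i ∈ Finset.range n, Y ^ i) * Y) with hBdef
  set Q := (1 : Matrix (Fin m) (Fin m) ℂ) - P with hQdef
  set lam := (1 : ℂ) - t ^ (-(n : ℤ)) with hlam
  set p : Fin m → ℂ := fun i => if (n : ℤ) ∣ (b i + a) then 0 else 1 with hp
  set qv : Fin m → ℂ := fun i => 1 - p i with hqv
  -- ### the permutation structure of C and X
  set f := Stmt14Aux.sh m with hf
  set g : Fin m → ℂ := fun i => if (i : ℕ) = m - 1 then t else 1 with hg
  have hCpm : C = diagonal g * Stmt14Aux.pm m f := by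
    ext i j
    rw [hC i j, Matrix.diagonal_mul]
    simp only [Stmt14Aux.pm, Matrix.of_apply, hf, Stmt14Aux.sh]
    have hfival : ((i + 1 : Fin m)).val = (i.val + 1) % m := by
      rw [Fin.val_add, Fin.val_one', Nat.add_mod_mod]
    by_cases h1 : (i : ℕ) + 1 = (j : ℕ)
    · have hlt : (i : ℕ) + 1 < m := h1 ▸ j.isLt
      have hij : j = i + 1 := by
        apply Fin.ext
        rw [hfival, Nat.mod_eq_of_lt hlt, h1]
      have hgi : ¬ (i:ℕ) = m - 1 := by omega
      rw [if_pos h1, if_pos hij, hg]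
      simp [hgi]
    · rw [if_neg h1]
      by_cases h2 : (i:ℕ) = m - 1 ∧ (j:ℕ) = 0
      · have hij : j = i + 1 := by
          apply Fin.ext
          rw [hfival, h2.1, h2.2, show m - 1 + 1 = m by omega, Nat.mod_self]
        rw [if_pos h2, if_pos hij, hg]
        simp [h2.1]
      · have hij : ¬ j = i + 1 := by
          intro hEq
          have hv : (j : ℕ) = ((i:ℕ) + 1) % m := by rw [hEq, hfival]
          by_cases hc : (i:ℕ) + 1 < m
          · rw [Nat.mod_eq_of_lt hc] at hv
            exact h1 hv.symm
          · have hiv : (i:ℕ) = m - 1 := by have := i.isLt; omega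
            have hm' : (i:ℕ) + 1 = m := by omega
            rw [hm', Nat.mod_self] at hv
            exact h2 ⟨hiv, hv⟩
        rw [if_neg h2, if_neg hij, mul_zero]
  have hCm : C ^ m = t • (1 : Matrix (Fin m) (Fin m) ℂ) := by
    rw [hCpm, Stmt14Aux.dp_pow]
    have h1 : f^[m] = id := by rw [hf]; exact Stmt14Aux.sh_iterate_m
    have h2 : (fun i : Fin m => ∏ j ∈ range m, g (f^[j] i)) = fun _ => t := by
      funext i
      have h3 := Stmt14Aux.orbit_prod (m := m) 1 0 (Nat.gcd_one_right m) g i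
      simp only [mul_one, add_zero] at h3
      rw [← hf] at h3
      rw [h3]
      have h4 : ∀ x : Fin m, g x = if x = (⟨m-1, by omega⟩ : Fin m) then t else 1 := by
        intro x
        by_cases hx : (x:ℕ) = m-1
        · have hx2 : x = (⟨m-1, by omega⟩ : Fin m) := Fin.ext hx
          simp [hg, hx, hx2]
        · have hx2 : x ≠ (⟨m-1, by omega⟩ : Fin m) := fun hEq => hx (by rw [hEq])
          simp [hg, hx, hx2]
      rw [Finset.prod_congr rfl (fun x _ => h4 x), Finset.prod_ite_eq' univ _ (fun _ => t)]
      simp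
    rw [h1, Stmt14Aux.pm_id, mul_one, h2]
    have h5 : (fun _ : Fin m => t) = t • (fun _ : Fin m => (1:ℂ)) := by
      funext x; simp
    rw [h5, Matrix.diagonal_smul, Matrix.diagonal_one]
  have hCnm : ∀ k : ℕ, C ^ (m * k) = (t ^ k) • (1 : Matrix (Fin m) (Fin m) ℂ) := by
    intro k
    rw [pow_mul, hCm, smul_pow, one_pow]
  have hXright : X * ((t ^ n)⁻¹ • C ^ (n * (m - 1))) = 1 := by
    have hnm : n + n * (m - 1) = m * n := by
      obtain ⟨m', rfl⟩ : ∃ m', m = m' + 1 := ⟨m - 1, by omega⟩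
      simp; ring
    rw [hX, mul_smul_comm, ← pow_add, hnm, hCnm n, smul_smul, inv_mul_cancel₀ htn0, one_smul]
  have hXleft : ((t ^ n)⁻¹ • C ^ (n * (m - 1))) * X = 1 := by
    have hnm : n * (m - 1) + n = m * n := by
      obtain ⟨m', rfl⟩ : ∃ m', m = m' + 1 := ⟨m - 1, by omega⟩
      simp; ring
    rw [hX, smul_mul_assoc, ← pow_add, hnm, hCnm n, smul_smul, inv_mul_cancel₀ htn0, one_smul]
  have hXinv : X⁻¹ = (t ^ n)⁻¹ • C ^ (n * (m - 1)) := Matrix.inv_eq_right_inv hXright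
  have hXiX : X⁻¹ * X = 1 := by rw [hXinv]; exact hXleft
  have hXXi : X * X⁻¹ = 1 := by rw [hXinv]; exact hXright
  have hXm : X ^ m = (t ^ n) • (1 : Matrix (Fin m) (Fin m) ℂ) := by
    rw [hX, ← pow_mul, mul_comm n m, hCnm n]
  -- ### commutation of X with diagonal matrices
  have hXpm : X = diagonal (fun i => ∏ j ∈ range n, g (f^[j] i)) * Stmt14Aux.pm m (f^[n]) := by
    rw [hX, hCpm, Stmt14Aux.dp_pow]
  have hdiagswap : ∀ (d1 d2 : Fin m → ℂ) (M : Matrix (Fin m) (Fin m) ℂ),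
      diagonal d1 * (diagonal d2 * M) = diagonal d2 * (diagonal d1 * M) := by
    intro d1 d2 M
    rw [← mul_assoc, diagonal_mul_diagonal, ← mul_assoc, diagonal_mul_diagonal]
    have h2 : (fun i => d1 i * d2 i) = fun i => d2 i * d1 i := by
      funext i; exact mul_comm _ _
    rw [h2]
  have hXdiag : ∀ d : Fin m → ℂ, X * diagonal d = diagonal (fun i => d (f^[n] i)) * X := by
    intro d
    conv_lhs => rw [hXpm]
    conv_rhs => rw [hXpm]
    rw [mul_assoc, Stmt14Aux.pm_mul_diag, hdiagswap]
  have hdiagXinv : ∀ d : Fin m → ℂ,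
      diagonal d * X⁻¹ = X⁻¹ * diagonal (fun i => d (f^[n] i)) := by
    intro d
    have h1 : X⁻¹ * (X * diagonal d) * X⁻¹ = diagonal d * X⁻¹ := by
      rw [← mul_assoc X⁻¹ X, hXiX, one_mul]
    rw [← h1, hXdiag d, ← mul_assoc, mul_assoc (X⁻¹ * diagonal fun i => d (f^[n] i)), hXXi,
      mul_one]
  have hdiagXinvPow : ∀ (k : ℕ) (d : Fin m → ℂ),
      diagonal d * (X⁻¹) ^ k = (X⁻¹) ^ k * diagonal (fun i => d ((f^[n])^[k] i)) := by
    intro k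
    induction k with
    | zero => intro d; simp
    | succ k ih =>
      intro d
      have h2 : (fun i => d ((f^[n])^[k] (f^[n] i))) = fun i => d ((f^[n])^[k+1] i) := by
        funext i; rw [Function.iterate_succ_apply]
      rw [pow_succ, ← mul_assoc, ih d, mul_assoc, hdiagXinv, ← mul_assoc, ← pow_succ, h2]
  -- ### nilpotency of Q * X⁻¹
  have hQdiag : Q = diagonal qv := by
    rw [hQdef, hP, ← Matrix.diagonal_one, Matrix.diagonal_sub]
  have hQXinv : Q * X⁻¹ = X⁻¹ * diagonal (fun i => qv (f^[n] i)) := by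
    rw [hQdiag]; exact hdiagXinv qv
  have hNpow : ∀ k : ℕ, (Q * X⁻¹) ^ k
      = (X⁻¹) ^ k * diagonal (fun i => ∏ j ∈ range k, qv ((f^[n])^[j+1] i)) := by
    intro k
    induction k with
    | zero => simp
    | succ k ih =>
      rw [pow_succ', ih, hQXinv, mul_assoc X⁻¹, ← mul_assoc (diagonal fun i => qv (f^[n] i)),
        hdiagXinvPow k (fun i => qv (f^[n] i)), mul_assoc ((X⁻¹) ^ k), diagonal_mul_diagonal,
        ← mul_assoc, ← pow_succ']
      have h2 : (fun i => qv (f^[n] ((f^[n])^[k] i)) * ∏ j ∈ range k, qv ((f^[n])^[j+1] i))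
          = fun i => ∏ j ∈ range (k+1), qv ((f^[n])^[j+1] i) := by
        funext i
        rw [Finset.prod_range_succ, mul_comm, Function.iterate_succ_apply']
      rw [h2]
  have hx0 : ∃ x : Fin m, ¬ (n : ℤ) ∣ (b x + a) := by
    by_contra hcon
    push_neg at hcon
    have h1 : (n : ℤ) ∣ ∑ x : Fin m, (b x + a) := Finset.dvd_sum fun x _ => hcon x
    rw [Finset.sum_add_distrib, Finset.sum_const, Finset.card_univ, Fintype.card_fin] at h1
    have h2 : (n : ℤ) ∣ (m : ℤ) * a := by
      have h3 := dvd_sub h1 hb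
      simpa [nsmul_eq_mul] using h3
    have h3 : IsCoprime (n : ℤ) (m : ℤ) := Nat.isCoprime_iff_coprime.mpr hmn.symm
    exact ha (h3.dvd_of_dvd_mul_left h2)
  have hNm : (Q * X⁻¹) ^ m = 0 := by
    obtain ⟨x₀, hx₀⟩ := hx0
    rw [hNpow m]
    have hD : (fun i : Fin m => ∏ j ∈ range m, qv ((f^[n])^[j+1] i)) = fun _ => (0:ℂ) := by
      funext i
      have hiter : ∀ j : ℕ, (f^[n])^[j+1] i = f^[j*n + n] i := by
        intro j
        rw [← Function.iterate_mul]
        have : n * (j+1) = j * n + n := by ring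
        rw [this]
      rw [Finset.prod_congr rfl (fun j _ => by rw [hiter j])]
      have h4 := Stmt14Aux.orbit_prod (m := m) n n hmn qv i
      rw [← hf] at h4
      rw [h4]
      exact Finset.prod_eq_zero (Finset.mem_univ x₀) (by simp [hqv, hp, hx₀])
    rw [hD, Matrix.diagonal_zero, mul_zero]
  -- ### W is a genuine two-sided inverse
  have hgeomW : (∑ k ∈ range m, (Q * X⁻¹) ^ k) * (1 - Q * X⁻¹) = 1 := by
    have h1 := geom_sum_mul (Q * X⁻¹) m
    rw [hNm, zero_sub] at h1
    calc (∑ k ∈ range m, (Q * X⁻¹) ^ k) * (1 - Q * X⁻¹)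
        = -((∑ k ∈ range m, (Q * X⁻¹) ^ k) * (Q * X⁻¹ - 1)) := by noncomm_ring
      _ = -(-1) := by rw [h1]
      _ = 1 := neg_neg 1
  have hgeomW' : (1 - Q * X⁻¹) * (∑ k ∈ range m, (Q * X⁻¹) ^ k) = 1 := by
    have h1 := mul_geom_sum (Q * X⁻¹) m
    rw [hNm, zero_sub] at h1
    calc (1 - Q * X⁻¹) * (∑ k ∈ range m, (Q * X⁻¹) ^ k)
        = -((Q * X⁻¹ - 1) * (∑ k ∈ range m, (Q * X⁻¹) ^ k)) := by noncomm_ring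
      _ = -(-1) := by rw [h1]
      _ = 1 := neg_neg 1
  have hWeq : W = ∑ k ∈ range m, (Q * X⁻¹) ^ k := by
    rw [hW]; exact Matrix.inv_eq_right_inv hgeomW'
  have hWl : W * (1 - Q * X⁻¹) = 1 := by rw [hWeq]; exact hgeomW
  have hWr : (1 - Q * X⁻¹) * W = 1 := by rw [hWeq]; exact hgeomW'
  -- ### the geometric-series identities for A
  have hXS : X * (∑ i ∈ Finset.range m, X ^ i) = (∑ i ∈ Finset.range m, X ^ i) * X := by
    rw [Finset.mul_sum, Finset.sum_mul]
    exact Finset.sum_congr rfl fun i _ => (Commute.pow_right (Commute.refl X) i).eq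
  have hsmulfin : (t ^ n) • (1 : Matrix (Fin m) (Fin m) ℂ) - 1
      = ((t ^ n) - 1) • (1 : Matrix (Fin m) (Fin m) ℂ) := by
    rw [sub_smul, one_smul]
  have hscal : t ^ (-(n : ℤ)) * ((t ^ n) - 1) = lam := by
    rw [hlam, hz]
    field_simp
  have hAX : A * (1 - X⁻¹) = lam • (1 : Matrix (Fin m) (Fin m) ℂ) := by
    rw [hAdef, smul_mul_assoc, mul_assoc]
    have h1 : X * (1 - X⁻¹) = X - 1 := by rw [mul_sub, mul_one, hXXi]
    rw [h1, geom_sum_mul, hXm, hsmulfin, smul_smul, hscal]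
  have hXA' : (1 - X⁻¹) * A = lam • (1 : Matrix (Fin m) (Fin m) ℂ) := by
    rw [hAdef, mul_smul_comm]
    have h1 : (1 - X⁻¹) * ((∑ i ∈ Finset.range m, X ^ i) * X) = X ^ m - 1 := by
      calc (1 - X⁻¹) * ((∑ i ∈ Finset.range m, X ^ i) * X)
          = (1 - X⁻¹) * (X * (∑ i ∈ Finset.range m, X ^ i)) := by rw [hXS]
        _ = X * (∑ i ∈ Finset.range m, X ^ i) - X⁻¹ * (X * (∑ i ∈ Finset.range m, X ^ i)) := by
            rw [sub_mul, one_mul]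
        _ = X * (∑ i ∈ Finset.range m, X ^ i) - (∑ i ∈ Finset.range m, X ^ i) := by
            rw [← mul_assoc, hXiX, one_mul]
        _ = (X - 1) * (∑ i ∈ Finset.range m, X ^ i) := by noncomm_ring
        _ = X ^ m - 1 := mul_geom_sum X m
    rw [h1, hXm, hsmulfin, smul_smul, hscal]
  have hXinvA : X⁻¹ * A = A - lam • (1 : Matrix (Fin m) (Fin m) ℂ) := by
    have h1 : A - X⁻¹ * A = lam • (1 : Matrix (Fin m) (Fin m) ℂ) := by
      rw [← hXA', sub_mul, one_mul]
    rw [← h1]; noncomm_ring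
  -- ### projection algebra
  have hPP : P * P = P := by
    have h2 : (fun i => p i * p i) = p := by
      funext i
      by_cases h : (n : ℤ) ∣ (b i + a) <;> simp [hp, h]
    rw [hP, diagonal_mul_diagonal, h2]
  have hQPz : Q * P = 0 := by rw [hQdef, sub_mul, one_mul, hPP, sub_self]
  have hPQz : P * Q = 0 := by rw [hQdef, mul_sub, mul_one, hPP, sub_self]
  have hQQ : Q * Q = Q := by
    have h2 : ((1:Matrix (Fin m) (Fin m) ℂ) - P) * (1 - P) = 1 - P - (P - P * P) := by noncomm_ring
    rw [hQdef, h2, hPP, sub_self, sub_zero]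
  have hQP1 : Q + P = 1 := by rw [hQdef]; noncomm_ring
  -- ### the key identity W * (P * (A * P)) = A * P
  have h6 : (1 - Q * X⁻¹) * (A * P) = P * (A * P) := by
    have hXinvAP : X⁻¹ * (A * P) = A * P - lam • P := by
      rw [← mul_assoc, hXinvA, sub_mul,
        smul_mul_assoc lam (1 : Matrix (Fin m) (Fin m) ℂ) P, Matrix.one_mul]
    rw [sub_mul, one_mul, mul_assoc, hXinvAP, mul_sub, mul_smul_comm, hQPz, smul_zero,
      sub_zero, hQdef]
    noncomm_ring
  have e1 : W * (P * (A * P)) = A * P := by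
    rw [← h6, ← mul_assoc, hWl, one_mul]
  -- ### the Y side: everything is diagonal
  set yv : Fin m → ℂ := fun i =>
    t * Complex.exp (2 * (Real.pi : ℂ) * Complex.I * (b i : ℂ) / (n : ℂ)) with hyv
  have hyne0 : ∀ i, yv i ≠ 0 := fun i => mul_ne_zero ht0 (Complex.exp_ne_zero _)
  have hyn : ∀ i, yv i ^ n = t ^ n := by
    intro i
    rw [hyv]
    simp only
    rw [mul_pow]
    have h1 : Complex.exp (2 * (Real.pi:ℂ) * Complex.I * ((b i : ℤ) : ℂ) / (n:ℂ)) ^ n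
        = Complex.exp ((n:ℂ) * (2 * (Real.pi:ℂ) * Complex.I * ((b i : ℤ) : ℂ) / (n:ℂ))) :=
      (Complex.exp_nat_mul _ n).symm
    have hn0 : (n:ℂ) ≠ 0 := Nat.cast_ne_zero.mpr (by omega)
    have h2 : (n:ℂ) * (2 * (Real.pi:ℂ) * Complex.I * ((b i : ℤ) : ℂ) / (n:ℂ))
        = ((b i : ℤ) : ℂ) * (2 * (Real.pi:ℂ) * Complex.I) := by
      field_simp
    rw [h1, h2, Complex.exp_int_mul_two_pi_mul_I, mul_one]
  have hyne1 : ∀ i, yv i ≠ 1 := by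
    intro i h
    exact htn (by rw [← hyn i, h, one_pow])
  have h1yne : ∀ i, (1 : ℂ) - (yv i)⁻¹ ≠ 0 := by
    intro i h
    rw [sub_eq_zero, eq_comm, inv_eq_one] at h
    exact hyne1 i h
  have hYdiag : Y = diagonal yv := by
    rw [hY, ← Matrix.diagonal_smul]
    rfl
  have hYinv : Y⁻¹ = diagonal (fun i => (yv i)⁻¹) := by
    apply Matrix.inv_eq_right_inv
    have h2 : (fun i => yv i * (yv i)⁻¹) = fun _ : Fin m => (1:ℂ) := by
      funext i
      exact mul_inv_cancel₀ (hyne0 i)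
    rw [hYdiag, diagonal_mul_diagonal, h2, Matrix.diagonal_one]
  have hVd : V = diagonal (fun i => (1 - p i * (yv i)⁻¹)⁻¹) := by
    have h0 : (1 : Matrix (Fin m) (Fin m) ℂ) - P * Y⁻¹ = diagonal (fun i => 1 - p i * (yv i)⁻¹) := by
      rw [hP, hYinv, diagonal_mul_diagonal, ← Matrix.diagonal_one, Matrix.diagonal_sub]
    rw [hV, h0]
    apply Matrix.inv_eq_right_inv
    rw [diagonal_mul_diagonal]
    have h2 : (fun i => (1 - p i * (yv i)⁻¹) * (1 - p i * (yv i)⁻¹)⁻¹) = fun _ : Fin m => (1:ℂ) := by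
      funext i
      apply mul_inv_cancel₀
      by_cases h : (n : ℤ) ∣ (b i + a)
      · simp [hp, h]
      · have hpi : p i = 1 := by simp [hp, h]
        rw [hpi, one_mul]
        exact h1yne i
    rw [h2, Matrix.diagonal_one]
  have hBd : B = diagonal (fun i => -(t ^ (-(n : ℤ))) * ((∑ k ∈ range n, yv i ^ k) * yv i)) := by
    have h1 : ∀ k : ℕ, (diagonal yv : Matrix (Fin m) (Fin m) ℂ) ^ k = diagonal (fun i => yv i ^ k) := by
      intro k; rw [Matrix.diagonal_pow]; rfl
    have hsum : (∑ k ∈ range n, Y ^ k) = diagonal (fun i => ∑ k ∈ range n, yv i ^ k) := by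
      rw [hYdiag]
      calc ∑ k ∈ range n, (diagonal yv : Matrix (Fin m) (Fin m) ℂ) ^ k
          = ∑ k ∈ range n, diagonal (fun i => yv i ^ k) := Finset.sum_congr rfl (fun k _ => h1 k)
        _ = diagonal (fun i => ∑ k ∈ range n, yv i ^ k) := by
            ext i j
            rcases eq_or_ne i j with rfl | hij
            · simp [Matrix.sum_apply]
            · simp [Matrix.sum_apply, Matrix.diagonal_apply_ne _ hij]
    rw [hBdef, hsum, hYdiag, diagonal_mul_diagonal, ← Matrix.diagonal_smul]
    rfl
  have entry : ∀ y : ℂ, y ≠ 0 → y ≠ 1 → y ^ n = t ^ n →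
      -(t ^ (-(n : ℤ))) * ((∑ k ∈ range n, y ^ k) * y) + lam * (1 - y⁻¹)⁻¹ = 0 := by
    intro y hy0 hy1 hyn'
    have hy1' : y - 1 ≠ 0 := sub_ne_zero.mpr hy1
    have h1y : (1:ℂ) - y⁻¹ ≠ 0 := by
      intro h
      rw [sub_eq_zero, eq_comm, inv_eq_one] at h
      exact hy1 h
    have hgs : (∑ k ∈ range n, y ^ k) * (y - 1) = t ^ n - 1 := by
      rw [geom_sum_mul, hyn']
    have h2 : (1:ℂ) - y⁻¹ = (y - 1)/y := by field_simp
    rw [hlam, hz, h2, inv_div]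
    field_simp
    linear_combination (-y) * hgs
  have key : B * P + lam • (V * P) = 0 := by
    rw [hBd, hVd, hP, diagonal_mul_diagonal, diagonal_mul_diagonal]
    ext i j
    rcases eq_or_ne i j with rfl | hij
    · simp only [Matrix.add_apply, Matrix.smul_apply, Matrix.diagonal_apply_eq,
        Matrix.zero_apply, smul_eq_mul]
      by_cases h : (n : ℤ) ∣ (b i + a)
      · simp [hp, h]
      · have hpi : p i = 1 := by simp [hp, h]
        rw [hpi, mul_one, mul_one, one_mul]
        exact entry (yv i) (hyne0 i) (hyne1 i) (hyn i)
    · simp [Matrix.diagonal_apply_ne _ hij]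
  -- ### assembling the two block identities
  have upper : (A * Q + W * P) * (Q + P * A * P) = A := by
    calc (A * Q + W * P) * (Q + P * A * P)
        = A * (Q * Q) + A * ((Q * P) * (A * P)) + W * (P * Q) + W * ((P * P) * (A * P)) := by
          noncomm_ring
      _ = A * Q + W * (P * (A * P)) := by
          rw [hQQ, hQPz, hPQz, hPP]; simp
      _ = A * Q + A * P := by rw [e1]
      _ = A := by rw [← mul_add, hQP1, mul_one]
  have lower : (B * Q - V * (1 - X⁻¹) * W * P) * (Q + P * A * P) = B := by
    have h7 : -(B * P) = lam • (V * P) := neg_eq_of_add_eq_zero_right key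
    calc (B * Q - V * (1 - X⁻¹) * W * P) * (Q + P * A * P)
        = B * (Q * Q) + B * ((Q * P) * (A * P))
            - V * ((1 - X⁻¹) * (W * (P * Q))) - V * ((1 - X⁻¹) * (W * ((P * P) * (A * P)))) := by
          noncomm_ring
      _ = B * Q - V * ((1 - X⁻¹) * (A * P)) := by
          rw [hQQ, hQPz, hPQz, hPP, e1]; simp
      _ = B * Q - lam • (V * P) := by
          rw [← mul_assoc (1 - X⁻¹), hXA',
            smul_mul_assoc lam (1 : Matrix (Fin m) (Fin m) ℂ) P, Matrix.one_mul,
            mul_smul_comm lam V P]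
      _ = B := by
          rw [← h7, sub_neg_eq_add, ← mul_add, hQP1, mul_one]
  -- ### conclusion
  rw [hK, hΘ, hJ, Matrix.fromRows_mul, upper, lower]
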